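/- arXiv:2304.07694 — 11 statements merged into one kernel-verified Lean document; each statement's English description precedes it below -/
import Mathlib

section
/- Let Q = {(A,b) ∈ ℝ³ × (ℝ³)* : b(A) = 1}. If (A₁,b₁), (A₂,b₂) ∈ Q satisfy the horizontality condition b₂ − b₁ = A₁ × A₂ (identifying (ℝ³)* with ℝ³ via the standard inner product), then the scalar triple products satisfy (A₁ × A₂)·(b₁ × b₂) = 0; i.e., the intersection point of the projective lines [b₁], [b₂] lies on the projective line through [A₁] and [A₂]. -/
open Matrix

/-- If `(A₁,b₁)` and `(A₂,b₂)` lie on the quadric `{bA = 1}` and satisfy the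
horizontality condition `b₂ − b₁ = A₁ × A₂`, then `(A₁ × A₂)·(b₁ × b₂) = 0`;
i.e., the intersection point of the lines `[b₁], [b₂]` lies on the line through
`[A₁]` and `[A₂]`. -/
theorem horizontal_segment_inscribed
    (A₁ A₂ b₁ b₂ : Fin 3 → ℝ)
    (h1 : b₁ ⬝ᵥ A₁ = 1) (h2 : b₂ ⬝ᵥ A₂ = 1)
    (hhor : b₂ - b₁ = crossProduct A₁ A₂) :
    (crossProduct A₁ A₂) ⬝ᵥ (crossProduct b₁ b₂) = 0 := by
  have key := cross_dot_cross A₁ A₂ b₁ b₂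
  have hA1 : A₁ ⬝ᵥ (b₂ - b₁) = 0 := by rw [hhor]; exact dot_self_cross A₁ A₂
  have hA2 : A₂ ⬝ᵥ (b₂ - b₁) = 0 := by rw [hhor]; exact dot_cross_self A₁ A₂
  rw [dotProduct_sub] at hA1 hA2
  have e1 : A₁ ⬝ᵥ b₂ = 1 := by
    have : A₁ ⬝ᵥ b₁ = 1 := by rwa [dotProduct_comm]
    linarith
  have e2 : A₂ ⬝ᵥ b₁ = 1 := by
    have : A₂ ⬝ᵥ b₂ = 1 := by rwa [dotProduct_comm]
    linarith
  have e3 : A₁ ⬝ᵥ b₁ = 1 := by rwa [dotProduct_comm]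
  have e4 : A₂ ⬝ᵥ b₂ = 1 := by rwa [dotProduct_comm]
  rw [key, e1, e2, e3, e4]
  ring
end

section
/- Suppose A₁, A₂ ∈ ℝ³, b₁, b₂ ∈ (ℝ³)* represent an inscribed pair of 2-gons: [b₁×b₂] lies on the line through [A₁], [A₂], i.e., A₁ × A₂ = λ₁ b₁ + λ₂ b₂ with λ₁, λ₂ ≠ 0, and bᵢAᵢ ≠ 0 for i = 1,2. Then there exist unique nonzero reals x₁, x₂ such that the rescaled lifts (x₁A₁, b₁/x₁), (x₂A₂, b₂/x₂) satisfy the horizontality condition (x₁A₁) × (x₂A₂) = b₂/x₂ − b₁/x₁; explicitly x₁ = (λ₂/λ₁²)^{1/3} and x₂ = −(λ₁/λ₂²)^{1/3}. -/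
open Matrix

lemma exists_cube_root (c : ℝ) : ∃ x : ℝ, x ^ 3 = c := by
  have base : ∀ d : ℝ, 0 ≤ d → ∃ x : ℝ, x ^ 3 = d := by
    intro d hd
    refine ⟨d ^ ((1:ℝ)/3), ?_⟩
    have h1 : (d ^ ((1:ℝ)/3)) ^ (3:ℕ) = d ^ (((1:ℝ)/3) * 3) := by
      rw [← Real.rpow_natCast (d ^ ((1:ℝ)/3)) 3, ← Real.rpow_mul hd]
      norm_num
    rw [h1]
    norm_num
  rcases le_or_gt 0 c with h | h
  · exact base c h
  · obtain ⟨x, hx⟩ := base (-c) (by linarith)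
    exact ⟨-x, by rw [show (-x) ^ 3 = -(x ^ 3) by ring, hx, neg_neg]⟩

lemma cube_injective : Function.Injective fun x : ℝ => x ^ 3 :=
  (Odd.strictMono_pow (by decide)).injective

/-- Given an inscribed pair of 2-gons, represented by `A₁, A₂, b₁, b₂` with
`A₁ × A₂ = λ₁ b₁ + λ₂ b₂` (`λ₁, λ₂ ≠ 0`) and `bᵢAᵢ ≠ 0`, there exist unique
nonzero reals `x₁, x₂` such that the rescaled lifts `(x₁A₁, b₁/x₁)`,
`(x₂A₂, b₂/x₂)` satisfy the horizontality condition
`(x₁A₁) × (x₂A₂) = b₂/x₂ − b₁/x₁`; explicitly `x₁³ = λ₂/λ₁²` and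
`x₂³ = −λ₁/λ₂²`, i.e. `x₁ = ∛(λ₂/λ₁²)`, `x₂ = −∛(λ₁/λ₂²)`. -/
theorem unique_horizontal_lift_of_inscribed_2gon
    (A₁ A₂ b₁ b₂ : Fin 3 → ℝ) (l₁ l₂ : ℝ)
    (hl₁ : l₁ ≠ 0) (hl₂ : l₂ ≠ 0)
    (hb : LinearIndependent ℝ ![b₁, b₂])
    (hins : crossProduct A₁ A₂ = l₁ • b₁ + l₂ • b₂)
    (hbA₁ : b₁ ⬝ᵥ A₁ ≠ 0) (hbA₂ : b₂ ⬝ᵥ A₂ ≠ 0) :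
    ∃ p : ℝ × ℝ,
      (p.1 ≠ 0 ∧ p.2 ≠ 0 ∧
        crossProduct (p.1 • A₁) (p.2 • A₂) = p.2⁻¹ • b₂ - p.1⁻¹ • b₁) ∧
      (p.1 ^ 3 = l₂ / l₁ ^ 2 ∧ p.2 ^ 3 = -(l₁ / l₂ ^ 2)) ∧
      ∀ q : ℝ × ℝ,
        (q.1 ≠ 0 ∧ q.2 ≠ 0 ∧
          crossProduct (q.1 • A₁) (q.2 • A₂) = q.2⁻¹ • b₂ - q.1⁻¹ • b₁) →
        q = p := by
  -- key equivalence
  have key : ∀ x y : ℝ, x ≠ 0 → y ≠ 0 →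
      (crossProduct (x • A₁) (y • A₂) = y⁻¹ • b₂ - x⁻¹ • b₁ ↔
        (x ^ 2 * y * l₁ = -1 ∧ x * y ^ 2 * l₂ = 1)) := by
    intro x y hx hy
    have hcross : crossProduct (x • A₁) (y • A₂) = (x * y) • (l₁ • b₁ + l₂ • b₂) := by
      rw [_root_.map_smul, LinearMap.map_smul₂, smul_smul, mul_comm y x, hins]
    rw [hcross]
    constructor
    · intro h
      have h0 : (x * y * l₁ + x⁻¹) • b₁ + (x * y * l₂ - y⁻¹) • b₂ = 0 := by
        have := sub_eq_zero.mpr h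
        rw [smul_add, smul_smul, smul_smul] at this
        rw [add_smul, sub_smul]
        linear_combination (norm := module) this
      obtain ⟨h1, h2⟩ := LinearIndependent.pair_iff.mp hb _ _ h0
      constructor
      · have := congrArg (· * x) h1
        field_simp at this ⊢
        linarith [this]
      · have := congrArg (· * y) h2
        field_simp at this ⊢
        linarith [this]
    · rintro ⟨h1, h2⟩
      have e1 : x * y * l₁ = -x⁻¹ := by
        field_simp
        linear_combination h1
      have e2 : x * y * l₂ = y⁻¹ := by
        field_simp
        linear_combination h2
      rw [smul_add, smul_smul, smul_smul, e1, e2]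
      module
  obtain ⟨x, hx3⟩ := exists_cube_root (l₂ / l₁ ^ 2)
  obtain ⟨y, hy3⟩ := exists_cube_root (-(l₁ / l₂ ^ 2))
  have hx : x ≠ 0 := by
    intro h; rw [h] at hx3
    exact hl₂ (by field_simp at hx3; simpa using hx3.symm)
  have hy : y ≠ 0 := by
    intro h; rw [h] at hy3
    exact hl₁ (by field_simp at hy3; simpa using hy3)
  have h1 : x ^ 2 * y * l₁ = -1 := by
    apply cube_injective
    show (x ^ 2 * y * l₁) ^ 3 = (-1 : ℝ) ^ 3
    have : (x ^ 2 * y * l₁) ^ 3 = (x ^ 3) ^ 2 * y ^ 3 * l₁ ^ 3 := by ring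
    rw [this, hx3, hy3]
    field_simp
  have h2 : x * y ^ 2 * l₂ = 1 := by
    apply cube_injective
    show (x * y ^ 2 * l₂) ^ 3 = (1 : ℝ) ^ 3
    have : (x * y ^ 2 * l₂) ^ 3 = x ^ 3 * (y ^ 3) ^ 2 * l₂ ^ 3 := by ring
    rw [this, hx3, hy3]
    field_simp
  refine ⟨(x, y), ⟨hx, hy, (key x y hx hy).mpr ⟨h1, h2⟩⟩, ⟨hx3, hy3⟩, ?_⟩
  rintro ⟨q1, q2⟩ ⟨hq1, hq2, hq⟩
  obtain ⟨e1, e2⟩ := (key q1 q2 hq1 hq2).mp hq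
  have hq13 : q1 ^ 3 = l₂ / l₁ ^ 2 := by
    have h0 : q1 * q2 ^ 2 * (q1 ^ 3 * l₁ ^ 2 - l₂) = 0 := by
      linear_combination (q1 ^ 2 * q2 * l₁ - 1) * e1 + (-1 : ℝ) * e2
    rcases mul_eq_zero.mp h0 with h | h
    · exact absurd h (mul_ne_zero hq1 (pow_ne_zero 2 hq2))
    · field_simp
      linarith [h]
  have hq23 : q2 ^ 3 = -(l₁ / l₂ ^ 2) := by
    have h0 : q1 ^ 2 * q2 * (q2 ^ 3 * l₂ ^ 2 + l₁) = 0 := by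
      linear_combination (q1 * q2 ^ 2 * l₂ + 1) * e2 + e1
    rcases mul_eq_zero.mp h0 with h | h
    · exact absurd h (mul_ne_zero (pow_ne_zero 2 hq1) hq2)
    · field_simp
      linarith [h]
  have : q1 = x := cube_injective (hq13.trans hx3.symm)
  have : q2 = y := cube_injective (hq23.trans hy3.symm)
  simp_all
end

section
/- Let (Aᵢ, bᵢ) ∈ Q = {bA = 1} ⊂ ℝ³ × (ℝ³)*, i = 1,2,3, satisfy the two horizontality conditions b₂ − b₁ = A₁ × A₂ and b₃ − b₂ = A₂ × A₃. Then b₃(A₁) + b₁(A₃) = 2. -/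
open Matrix

/-- For a horizontal 3-gon on the quadric `{bA = 1}` (with horizontality
conditions `b₂ − b₁ = A₁ × A₂` and `b₃ − b₂ = A₂ × A₃`) one has
`b₃A₁ + b₁A₃ = 2`. -/
theorem horizontal_trigon_key_identity
    (A₁ A₂ A₃ b₁ b₂ b₃ : Fin 3 → ℝ)
    (h1 : b₁ ⬝ᵥ A₁ = 1) (h2 : b₂ ⬝ᵥ A₂ = 1) (h3 : b₃ ⬝ᵥ A₃ = 1)
    (h12 : b₂ - b₁ = crossProduct A₁ A₂)
    (h23 : b₃ - b₂ = crossProduct A₂ A₃) :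
    b₃ ⬝ᵥ A₁ + b₁ ⬝ᵥ A₃ = 2 := by
  have e12 : ∀ i, b₂ i - b₁ i = crossProduct A₁ A₂ i := fun i => by
    rw [← h12]; rfl
  have e23 : ∀ i, b₃ i - b₂ i = crossProduct A₂ A₃ i := fun i => by
    rw [← h23]; rfl
  simp only [crossProduct, LinearMap.mk₂_apply, cons_val_zero, cons_val_one, head_cons,
    cons_val_two, tail_cons] at e12 e23
  have c0 := e12 0; have c1 := e12 1; have c2 := e12 2
  have d0 := e23 0; have d1 := e23 1; have d2 := e23 2
  simp [dotProduct, Fin.sum_univ_three] at h1 h2 h3 ⊢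
  simp at c0 c1 c2 d0 d1 d2
  linear_combination h1 + h3 + (A₁ 0 - A₃ 0) * (c0 + d0) + (A₁ 1 - A₃ 1) * (c1 + d1) +
    (A₁ 2 - A₃ 2) * (c2 + d2)
end

section
/- Let q₁, q₂, q₃ be three distinct points of the quadric Q = {bA = 1} ⊂ ℝ³ × (ℝ³)* such that each pair (qᵢ, qⱼ) satisfies the horizontality condition bⱼ − bᵢ = Aᵢ × Aⱼ. Then q₁, q₂, q₃ are collinear in ℝ³ × (ℝ³)* ≅ ℝ⁶; i.e., there are no non-degenerate horizontal triangles. -/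
open Matrix

/-- Three distinct points of the quadric `{bA = 1} ⊂ ℝ³ × (ℝ³)*` which are
pairwise joined by horizontal segments (`bⱼ − bᵢ = Aᵢ × Aⱼ`) are necessarily
collinear in ℝ⁶: there are no non-degenerate horizontal triangles. -/
theorem no_nondegenerate_horizontal_triangles
    (A₁ A₂ A₃ b₁ b₂ b₃ : Fin 3 → ℝ)
    (h1 : b₁ ⬝ᵥ A₁ = 1) (h2 : b₂ ⬝ᵥ A₂ = 1) (h3 : b₃ ⬝ᵥ A₃ = 1)
    (hne12 : (A₁, b₁) ≠ (A₂, b₂)) (hne13 : (A₁, b₁) ≠ (A₃, b₃))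
    (hne23 : (A₂, b₂) ≠ (A₃, b₃))
    (h12 : b₂ - b₁ = crossProduct A₁ A₂)
    (h23 : b₃ - b₂ = crossProduct A₂ A₃)
    (h13 : b₃ - b₁ = crossProduct A₁ A₃) :
    Collinear ℝ ({(A₁, b₁), (A₂, b₂), (A₃, b₃)} :
      Set ((Fin 3 → ℝ) × (Fin 3 → ℝ))) := by
  -- A₁ ≠ A₂, since otherwise b₂ = b₁ and the two points coincide.
  have hA12 : A₂ - A₁ ≠ 0 := by
    intro h
    rw [sub_eq_zero] at h
    apply hne12
    have hb : b₂ - b₁ = 0 := by rw [h12, ← h, cross_self]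
    rw [sub_eq_zero] at hb
    exact Prod.ext h.symm hb.symm
  -- the three horizontality conditions force the A's to be collinear
  have hcross : crossProduct (A₂ - A₁) (A₃ - A₁) = 0 := by
    have e : crossProduct (A₂ - A₁) (A₃ - A₁)
        = crossProduct A₂ A₃ - crossProduct A₂ A₁
          - (crossProduct A₁ A₃ - crossProduct A₁ A₁) := by
      simp only [map_sub, LinearMap.sub_apply]
      abel
    rw [e, cross_self, ← cross_anticomm A₁ A₂, ← h12, ← h23, ← h13]
    abel
  -- hence A₃ - A₁ is a multiple of A₂ - A₁
  obtain ⟨t, ht⟩ : ∃ t : ℝ, t • (A₂ - A₁) = A₃ - A₁ := by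
    by_contra h
    push_neg at h
    have hli := (LinearIndependent.pair_iff' hA12).2 h
    exact (crossProduct_ne_zero_iff_linearIndependent.2 hli) hcross
  -- and then b₃ - b₁ is the same multiple of b₂ - b₁
  have hb : b₃ - b₁ = t • (b₂ - b₁) := by
    have h0 : crossProduct A₁ (A₃ - A₁) = crossProduct A₁ (t • (A₂ - A₁)) := by
      rw [ht]
    rw [h13, h12]
    simpa [map_sub, _root_.map_smul, cross_self, smul_sub] using h0
  -- conclude collinearity with direction (A₂ - A₁, b₂ - b₁)
  rw [collinear_iff_of_mem (Set.mem_insert (A₁, b₁) _)]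
  refine ⟨(A₂ - A₁, b₂ - b₁), ?_⟩
  intro p hp
  simp only [Set.mem_insert_iff, Set.mem_singleton_iff] at hp
  rcases hp with rfl | rfl | rfl
  · exact ⟨0, by simp⟩
  · refine ⟨1, ?_⟩
    refine Prod.ext ?_ ?_ <;> simp <;> abel
  · refine ⟨t, ?_⟩
    refine Prod.ext ?_ ?_
    · show A₃ = t • (A₂ - A₁) + A₁
      rw [ht]; abel
    · show b₃ = t • (b₂ - b₁) + b₁
      rw [← hb]; abel
end

section
/- Let p be a unit quaternion and n ≥ 1, w integers. Then pⁿ = (−1)^w if and only if there exists an integer w' with w' ≡ w (mod 2) such that Re(p) = cos(π w'/n). -/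
open Complex in
lemma neg_one_zpow_congr_aux {a b : ℤ} (h : a ≡ b [ZMOD 2]) : (-1 : ℂ) ^ a = (-1 : ℂ) ^ b := by
  obtain ⟨k, hk⟩ : (2:ℤ) ∣ b - a := Int.ModEq.dvd h
  have hb : b = a + 2 * k := by linarith
  rw [hb, zpow_add₀ (by norm_num : (-1:ℂ) ≠ 0), zpow_mul]
  norm_num

open Complex in
lemma exp_int_pi : ∀ m : ℤ, Complex.exp (m * Real.pi * I) = (-1 : ℂ) ^ m := by
  intro m
  rw [mul_assoc, Complex.exp_int_mul, Complex.exp_pi_mul_I]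

open Complex Real in
lemma complex_aux (z : ℂ) (hz : ‖z‖ = 1) (n : ℕ) (hn : 1 ≤ n) (w : ℤ) :
    z ^ n = (-1 : ℂ) ^ w ↔
      ∃ w' : ℤ, w' ≡ w [ZMOD 2] ∧ z.re = Real.cos (Real.pi * w' / n) := by
  have hn0 : (n : ℝ) ≠ 0 := Nat.cast_ne_zero.2 (by omega)
  have hzne : z ≠ 0 := by
    intro h; rw [h] at hz; simp at hz
  constructor
  · intro h
    have hz1 : z = Complex.exp (z.arg * I) := by
      conv_lhs => rw [← Complex.norm_mul_exp_arg_mul_I z]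
      rw [hz]; simp
    have hpow : Complex.exp ((n : ℂ) * (z.arg * I)) = (-1 : ℂ) ^ w := by
      rw [Complex.exp_nat_mul, ← hz1, h]
    rw [← exp_int_pi w, Complex.exp_eq_exp_iff_exists_int] at hpow
    obtain ⟨k, hk⟩ := hpow
    refine ⟨w + 2 * k, Int.modEq_iff_dvd.mpr ⟨-k, by ring⟩, ?_⟩
    have harg : (n : ℝ) * z.arg = (w + 2 * k) * Real.pi := by
      have := hk
      have h2 : ((n : ℝ) * z.arg : ℂ) = (((w + 2*k) * Real.pi : ℝ) : ℂ) := by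
        apply mul_right_cancel₀ I_ne_zero
        push_cast at this ⊢
        rw [← mul_assoc] at this
        rw [this]; ring
      exact_mod_cast h2
    have harg2 : z.arg = Real.pi * ((w : ℝ) + 2 * k) / n := by
      field_simp at harg ⊢
      linarith [harg]
    have : Real.pi * ((w + 2 * k : ℤ) : ℝ) / n = z.arg := by
      rw [harg2]; push_cast; ring
    rw [this, Complex.cos_arg hzne, hz, div_one]
  · rintro ⟨w', hmod, hre⟩
    set θ : ℝ := Real.pi * w' / n with hθ
    have hnθ : (n : ℝ) * θ = w' * Real.pi := by rw [hθ]; field_simp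
    have hsq : z.im ^ 2 = Real.sin θ ^ 2 := by
      have h1 : z.re ^ 2 + z.im ^ 2 = 1 := by
        have := Complex.sq_norm z
        rw [hz] at this
        simpa [Complex.normSq_apply, sq] using this.symm
      have h2 := Real.sin_sq_add_cos_sq θ
      rw [hre] at h1
      linarith
    have him : z.im = Real.sin θ ∨ z.im = -Real.sin θ := sq_eq_sq_iff_eq_or_eq_neg.mp hsq
    have key : ∀ s : ℝ, z = Complex.exp (s * I) → (n : ℝ) * s = w' * Real.pi ∨ (n:ℝ) * s = -(w' * Real.pi) → True := fun _ _ _ => trivial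
    rcases him with him | him
    · have hz1 : z = Complex.exp (θ * I) := by
        rw [Complex.exp_mul_I]
        apply Complex.ext <;> simp [hre, him, Complex.cos_ofReal_re, Complex.sin_ofReal_re]
      rw [hz1, ← Complex.exp_nat_mul]
      have : (n : ℂ) * (θ * I) = (w' : ℂ) * Real.pi * I := by
        rw [← mul_assoc]
        norm_cast
        rw [hnθ]
      rw [this, exp_int_pi]
      exact neg_one_zpow_congr_aux hmod
    · have hz1 : z = Complex.exp ((-θ) * I) := by
        rw [Complex.exp_mul_I]
        apply Complex.ext <;> simp [hre, him, Complex.cos_ofReal_re, Complex.sin_ofReal_re]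
      rw [hz1, ← Complex.exp_nat_mul]
      have : (n : ℂ) * ((-θ) * I) = ((-w' : ℤ) : ℂ) * Real.pi * I := by
        rw [← mul_assoc]
        push_cast
        rw [show (n:ℂ) * (-θ) = -((n:ℝ)*θ : ℝ) by push_cast; ring, hnθ]
        push_cast; ring
      rw [this, exp_int_pi]
      exact neg_one_zpow_congr_aux (Int.ModEq.trans (by exact Int.ModEq.symm (Int.modEq_iff_dvd.mpr ⟨-w', by ring⟩)) hmod)

lemma quat_im_unit_sq {u : Quaternion ℝ} (h0 : u.re = 0) (h1 : ‖u‖ = 1) : u * u = -1 := by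
  have him : u.im = u := by ext <;> simp [h0]
  have hsq := Quaternion.im_sq u
  rw [him] at hsq
  have hns : Quaternion.normSq u = 1 := by
    rw [Quaternion.normSq_eq_norm_mul_self, h1]; norm_num
  rw [← sq, hsq, hns]
  norm_num

/-- For a unit quaternion `p` and integers `n ≥ 1`, `w`: `pⁿ = (−1)^w` iff
there is an integer `w' ≡ w (mod 2)` with `Re p = cos(π w'/n)`. -/
theorem unit_quaternion_pow_eq_neg_one_pow_iff
    (p : Quaternion ℝ) (hp : ‖p‖ = 1) (n : ℕ) (hn : 1 ≤ n) (w : ℤ) :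
    p ^ n = (-1 : Quaternion ℝ) ^ w ↔
      ∃ w' : ℤ, w' ≡ w [ZMOD 2] ∧ p.re = Real.cos (Real.pi * w' / n) := by
  classical
  set u : Quaternion ℝ :=
    if h : p.im = 0 then (show Quaternion ℝ from ⟨0, 1, 0, 0⟩) else ‖p.im‖⁻¹ • p.im with hu_def
  have hure : u.re = 0 := by
    rw [hu_def]; split <;> simp
  have hunorm : ‖u‖ = 1 := by
    rw [hu_def]; split
    · set q : Quaternion ℝ := ⟨0,1,0,0⟩ with hq
      have h1 : Quaternion.normSq q = 1 := by
        rw [Quaternion.normSq_def', hq]; norm_num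
      have h2 := Quaternion.normSq_eq_norm_mul_self q
      nlinarith [norm_nonneg q]
    · rename_i h
      rw [norm_smul]
      simp [norm_ne_zero_iff.2 h]
  have hu : u * u = -1 := quat_im_unit_sq hure hunorm
  set z : ℂ := ⟨p.re, ‖p.im‖⟩ with hz_def
  have hzre : z.re = p.re := rfl
  have hp_eq : Complex.liftAux u hu z = p := by
    rw [Complex.liftAux_apply]
    rw [Quaternion.algebraMap_def]
    show (p.re : Quaternion ℝ) + ‖p.im‖ • u = p
    rw [hu_def]
    by_cases h : p.im = 0
    · rw [h]
      simp only [norm_zero, zero_smul, add_zero]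
      conv_rhs => rw [← Quaternion.re_add_im p, h]
      rw [add_zero]
    · rw [dif_neg h, smul_smul, mul_inv_cancel₀ (norm_ne_zero_iff.2 h), one_smul,
        Quaternion.re_add_im]
  have hnormsq : ‖p‖ ^ 2 = p.re ^ 2 + ‖p.im‖ ^ 2 := by
    have h1 : Quaternion.normSq p = ‖p‖ * ‖p‖ := Quaternion.normSq_eq_norm_mul_self p
    have h2 : Quaternion.normSq p.im = ‖p.im‖ * ‖p.im‖ := Quaternion.normSq_eq_norm_mul_self p.im
    have h3 : Quaternion.normSq p = p.re ^ 2 + Quaternion.normSq p.im := by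
      simp [Quaternion.normSq_def']
      ring
    nlinarith
  have habs : ‖z‖ = 1 := by
    have : ‖z‖ ^ 2 = 1 := by
      rw [Complex.sq_norm, Complex.normSq_apply]
      show p.re * p.re + ‖p.im‖ * ‖p.im‖ = 1
      nlinarith [hnormsq, hp]
    nlinarith [norm_nonneg z, this]
  have hinj : Function.Injective (Complex.liftAux u hu) :=
    (Complex.liftAux u hu).toRingHom.injective
  have key : p ^ n = (-1 : Quaternion ℝ) ^ w ↔ z ^ n = (-1 : ℂ) ^ w := by
    constructor
    · intro h
      apply hinj
      rw [map_pow, hp_eq, h, map_zpow₀, map_neg, map_one]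
    · intro h
      rw [← hp_eq, ← map_pow, h, map_zpow₀, map_neg, map_one]
  rw [key, complex_aux z habs n hn w, hzre]
end

section
/- Let θ ∈ (0, π), φ ∈ (0, π/2), and let δ ∈ (0, π) be defined by sin(δ/2) = sin φ · sin(θ/2). Let v₀, v₁ be unit vectors in ℝ³ at colatitude φ from the north pole k, with v₁ obtained from v₀ by rotation about k by angle θ. Then (v₀ × v₁)·k = sin θ · sin² φ, ‖v₀ × v₁‖ = sin δ, and the real part of e^{−(θ/2)k} · e^{2δ u₀} (quaternion exponentials, with u₀ = (v₀ × v₁)/‖v₀ × v₁‖) equals cos(θ/2)·[1 − 4 sin²(θ/2) sin² φ]. -/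
open Matrix Real

/-- Key computation for the rolling monodromy of a regular spherical polygon:
with `v₀, v₁` unit vectors at colatitude `φ` from the north pole `k`, `v₁`
obtained from `v₀` by rotation about `k` by angle `θ`, and `δ` defined by
`sin(δ/2) = sin φ sin(θ/2)`, one has `(v₀ × v₁)·k = sin θ sin²φ`,
`‖v₀ × v₁‖ = sin δ`, and
`Re(e^{−(θ/2)k} e^{2δ u₀}) = cos(θ/2)(1 − 4 sin²(θ/2) sin²φ)`
where `u₀ = (v₀ × v₁)/‖v₀ × v₁‖`. -/
theorem regular_polygon_monodromy_real_part
    (θ φ δ : ℝ) (hθ : θ ∈ Set.Ioo 0 π) (hφ : φ ∈ Set.Ioo 0 (π / 2))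
    (hδ : δ ∈ Set.Ioo 0 π)
    (hδdef : sin (δ / 2) = sin φ * sin (θ / 2))
    (v₀ v₁ kvec w u₀ : Fin 3 → ℝ)
    (hv₀ : v₀ = ![sin φ, 0, cos φ])
    (hv₁ : v₁ = ![sin φ * cos θ, sin φ * sin θ, cos φ])
    (hk : kvec = ![0, 0, 1])
    (hw : w = crossProduct v₀ v₁)
    (hu₀ : u₀ = (Real.sqrt (w 0 ^ 2 + w 1 ^ 2 + w 2 ^ 2))⁻¹ • w) :
    w ⬝ᵥ kvec = sin θ * sin φ ^ 2 ∧
    Real.sqrt (w 0 ^ 2 + w 1 ^ 2 + w 2 ^ 2) = sin δ ∧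
    ((⟨cos (θ / 2), 0, 0, -sin (θ / 2)⟩ : Quaternion ℝ) *
        ⟨cos (2 * δ), sin (2 * δ) * u₀ 0, sin (2 * δ) * u₀ 1,
          sin (2 * δ) * u₀ 2⟩).re =
      cos (θ / 2) * (1 - 4 * sin (θ / 2) ^ 2 * sin φ ^ 2) := by
  obtain ⟨hδ0, hδπ⟩ := hδ
  have hsδ : 0 < sin δ := Real.sin_pos_of_pos_of_lt_pi hδ0 hδπ
  -- w components
  have hw0 : w 0 = -(cos φ * (sin φ * sin θ)) := by
    subst hw hv₀ hv₁; rw [cross_apply]; simp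
  have hw1 : w 1 = cos φ * (sin φ * cos θ) - sin φ * cos φ := by
    subst hw hv₀ hv₁; rw [cross_apply]; simp
  have hw2 : w 2 = sin φ * (sin φ * sin θ) := by
    subst hw hv₀ hv₁; rw [cross_apply]; simp
  -- half-angle identities
  have hsθ : sin θ = 2 * sin (θ / 2) * cos (θ / 2) := by
    rw [← Real.sin_two_mul]; ring_nf
  have hcθ : cos θ = 1 - 2 * sin (θ / 2) ^ 2 := by
    have h := Real.cos_two_mul (θ / 2)
    have h2 := Real.sin_sq_add_cos_sq (θ / 2)
    have : (2 : ℝ) * (θ / 2) = θ := by ring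
    rw [this] at h; linarith
  have hsδ2 : sin δ = 2 * sin (δ / 2) * cos (δ / 2) := by
    rw [← Real.sin_two_mul]; ring_nf
  have hcδ : cos δ = 1 - 2 * sin (δ / 2) ^ 2 := by
    have h := Real.cos_two_mul (δ / 2)
    have h2 := Real.sin_sq_add_cos_sq (δ / 2)
    have : (2 : ℝ) * (δ / 2) = δ := by ring
    rw [this] at h; linarith
  have hpθ := Real.sin_sq_add_cos_sq (θ / 2)
  have hcθ2 : cos (θ / 2) ^ 2 = 1 - sin (θ / 2) ^ 2 := by
    have := Real.sin_sq_add_cos_sq (θ / 2); linarith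
  have hcφ2 : cos φ ^ 2 = 1 - sin φ ^ 2 := by
    have := Real.sin_sq_add_cos_sq φ; linarith
  have hcδ2 : cos (δ / 2) ^ 2 = 1 - sin φ ^ 2 * sin (θ / 2) ^ 2 := by
    have := Real.sin_sq_add_cos_sq (δ / 2)
    linear_combination this - (sin (δ / 2) + sin φ * sin (θ / 2)) * hδdef
  have hpφ := Real.sin_sq_add_cos_sq φ
  have hpδ := Real.sin_sq_add_cos_sq (δ / 2)
  -- norm squared
  have hnorm : w 0 ^ 2 + w 1 ^ 2 + w 2 ^ 2 = sin δ ^ 2 := by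
    rw [hw0, hw1, hw2, hsθ, hcθ, hsδ2, hδdef]
    linear_combination (4 * sin φ^2 * sin (θ/2)^2) * hcφ2
      + (4 * sin φ^2 * sin (θ/2)^2 * (cos φ^2 + sin φ^2)) * hcθ2
      - (4 * sin φ^2 * sin (θ/2)^2) * hcδ2
  have hsqrt : Real.sqrt (w 0 ^ 2 + w 1 ^ 2 + w 2 ^ 2) = sin δ := by
    rw [hnorm, Real.sqrt_sq hsδ.le]
  refine ⟨?_, hsqrt, ?_⟩
  · subst hk; rw [show (w ⬝ᵥ ![0,0,1]) = w 2 by simp [dotProduct, Fin.sum_univ_three], hw2]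
    ring
  · have hu2 : u₀ 2 = (sin δ)⁻¹ * w 2 := by rw [hu₀, hsqrt]; simp
    erw [Quaternion.re_mul]
    simp only [hu2, hw2]
    have hs2δ : sin (2 * δ) = 2 * sin δ * cos δ := Real.sin_two_mul δ
    have hc2δ : cos (2 * δ) = 1 - 2 * sin δ ^ 2 := by
      have h := Real.cos_two_mul δ
      have h2 := Real.sin_sq_add_cos_sq δ
      linarith
    rw [hs2δ, hc2δ]
    field_simp
    rw [hsδ2, hcδ, hδdef, hsθ]
    linear_combination (-16 * cos (θ/2) * sin (θ/2)^3 * sin φ^3 * cos (δ/2)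
      - 8 * cos (θ/2) * sin φ^2 * sin (θ/2)^2 * (1 - 2 * sin φ * sin (θ/2) * cos (δ/2))) * hcδ2
end

section
/- For every integer n ≥ 6 there exists φ ∈ (0, π/2) such that cos(4π/n) = cos(2π/n)·[1 − 4 sin²(2π/n) sin² φ]. -/
open Real

/-- For every `n ≥ 6` there is `φ ∈ (0, π/2)` with
`cos(4π/n) = cos(2π/n)(1 − 4 sin²(2π/n) sin²φ)`. -/
theorem exists_phi_regular_hexagon_condition (n : ℕ) (hn : 6 ≤ n) :
    ∃ φ : ℝ, 0 < φ ∧ φ < π / 2 ∧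
      cos (4 * π / n) =
        cos (2 * π / n) * (1 - 4 * sin (2 * π / n) ^ 2 * sin φ ^ 2) := by
  have hn6 : (6 : ℝ) ≤ (n : ℝ) := by exact_mod_cast hn
  have hπ := Real.pi_pos
  set α : ℝ := 2 * π / n with hα
  have hα0 : 0 < α := by
    apply div_pos (by linarith) (by linarith)
  have hα3 : α ≤ π / 3 := by
    rw [hα, div_le_div_iff₀ (by linarith) (by norm_num)]
    nlinarith
  have h2α : 2 * α ≤ 2 * π / 3 := by linarith
  have hs : 0 < sin α := sin_pos_of_pos_of_lt_pi hα0 (by linarith)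
  have hc : (1 : ℝ) / 2 ≤ cos α := by
    have := Real.cos_pi_div_three
    have h := Real.cos_le_cos_of_nonneg_of_le_pi (le_of_lt hα0) (by linarith) hα3
    linarith
  have hc1 : cos α < 1 := by
    have h := Real.cos_lt_cos_of_nonneg_of_le_pi (le_refl (0:ℝ)) (by linarith) hα0
    simpa using h
  have hlt : cos (2 * α) < cos α :=
    Real.cos_lt_cos_of_nonneg_of_le_pi (le_of_lt hα0) (by linarith) (by linarith)
  have hpyth : sin α ^ 2 + cos α ^ 2 = 1 := Real.sin_sq_add_cos_sq α
  have hcos2 : cos (2 * α) = 1 - 2 * sin α ^ 2 := by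
    rw [Real.cos_two_mul]; nlinarith
  set t : ℝ := (cos α - cos (2 * α)) / (4 * sin α ^ 2 * cos α) with ht
  have hden : 0 < 4 * sin α ^ 2 * cos α := by positivity
  have ht0 : 0 < t := div_pos (by linarith) hden
  have ht1 : t < 1 := by
    rw [ht, div_lt_one hden]
    nlinarith [sq_nonneg (1 - cos α), sq_nonneg (cos α)]
  refine ⟨Real.arcsin (Real.sqrt t), ?_, ?_, ?_⟩
  · exact Real.arcsin_pos.2 (Real.sqrt_pos.2 ht0)
  · exact Real.arcsin_lt_pi_div_two.2 (by
      rw [show (1:ℝ) = Real.sqrt 1 by simp]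
      exact Real.sqrt_lt_sqrt (le_of_lt ht0) ht1)
  · have hsq : Real.sqrt t ≤ 1 := by
      rw [show (1:ℝ) = Real.sqrt 1 by simp]
      exact Real.sqrt_le_sqrt (le_of_lt ht1)
    have hsin : sin (Real.arcsin (Real.sqrt t)) = Real.sqrt t :=
      Real.sin_arcsin (by linarith [Real.sqrt_nonneg t]) hsq
    have h4 : 4 * π / (n : ℝ) = 2 * α := by rw [hα]; ring
    rw [h4, hsin, Real.sq_sqrt (le_of_lt ht0), ht]
    field_simp
    ring
end

section
/- The map j : Im(ℍ) × ℍ → Im(𝕆) sending (v, x + u) (with u, v imaginary quaternions, x real) to the Zorn matrix with diagonal entries x, −x, upper right entry v + u, and lower left entry v − u, pulls back the split octonion quadratic form ⟨ζ,ζ⟩ = −x² + b·A to the form |v|² − |x + u|² = |v|² − x² − |u|². In particular, j maps S² × S³ into the null cone of Im(𝕆), missing the origin. -/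
open Matrix

/-- The map `j : Im(ℍ) × ℍ → Im(𝕆)`, `(v, x+u) ↦ ((x, v+u), (v−u, −x))`,
pulls the split-octonion quadratic form `⟨ζ,ζ⟩ = −x² + b·A` back to
`|v|² − x² − |u|²`; in particular `j` maps `S² × S³` into the null cone of
`Im(𝕆)` and misses the origin. -/
theorem j_pullback_quadratic_form :
    (∀ (v u : Fin 3 → ℝ) (x : ℝ),
      -x ^ 2 + (v - u) ⬝ᵥ (v + u) = v ⬝ᵥ v - x ^ 2 - u ⬝ᵥ u) ∧
    (∀ (v u : Fin 3 → ℝ) (x : ℝ), v ⬝ᵥ v = 1 → x ^ 2 + u ⬝ᵥ u = 1 →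
      -x ^ 2 + (v - u) ⬝ᵥ (v + u) = 0 ∧
      ((x, v + u, v - u) : ℝ × (Fin 3 → ℝ) × (Fin 3 → ℝ)) ≠ (0, 0, 0)) := by
  have key : ∀ (v u : Fin 3 → ℝ) (x : ℝ),
      -x ^ 2 + (v - u) ⬝ᵥ (v + u) = v ⬝ᵥ v - x ^ 2 - u ⬝ᵥ u := by
    intro v u x
    simp only [dotProduct, Fin.sum_univ_three, Pi.sub_apply, Pi.add_apply]
    ring
  refine ⟨key, fun v u x hv hxu => ⟨by rw [key]; linarith, ?_⟩⟩
  intro h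
  have h1 : v + u = 0 := congrArg (Prod.fst ∘ Prod.snd) h
  have h2 : v - u = 0 := congrArg (Prod.snd ∘ Prod.snd) h
  have hv0 : v = 0 := by
    have hvu : v = u := sub_eq_zero.mp h2
    rw [hvu] at h1
    have h2u : (2 : ℝ) • u = 0 := by rw [two_smul]; exact h1
    have := (smul_eq_zero.mp h2u).resolve_left (by norm_num)
    rw [hvu, this]
  rw [hv0] at hv; simp at hv
end

section
/- The map π∘j : S² × S³ → (C∖{0})/ℝ⁺ is a bijection, where C is the null cone {ζ ∈ Im(𝕆) : ⟨ζ,ζ⟩ = 0}, j(v, x+u) is the Zorn matrix ((x, v+u),(v−u, −x)), and π is the quotient by positive rescaling. In particular, for every nonzero null ζ = ((x, A),(b, −x)), setting v = (A+b)/2 and u = (A−b)/2, one has |x + u| = |v| ≠ 0, and (v/|v|, (x+u)/|v|) is the unique preimage. -/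
open Matrix

/-- The map `π ∘ j : S² × S³ → (C∖0)/ℝ⁺` is a bijection: every nonzero null
`ζ = ((x, A), (b, −x))` has, with `v = (A+b)/2`, `u = (A−b)/2` and
`m = |v| = |x + u| ≠ 0`, the unique preimage `(v/m, (x + u)/m)` (together with
the positive scale factor `m`). -/
theorem pi_comp_j_bijective
    (x : ℝ) (A b : Fin 3 → ℝ) (hnull : b ⬝ᵥ A = x ^ 2)
    (hne : ((x, A, b) : ℝ × (Fin 3 → ℝ) × (Fin 3 → ℝ)) ≠ (0, 0, 0)) :
    let v := (1 / 2 : ℝ) • (A + b)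
    let u := (1 / 2 : ℝ) • (A - b)
    let m := Real.sqrt (v ⬝ᵥ v)
    let P : (Fin 3 → ℝ) × ℝ × (Fin 3 → ℝ) × ℝ → Prop := fun p =>
      p.1 ⬝ᵥ p.1 = 1 ∧ p.2.1 ^ 2 + p.2.2.1 ⬝ᵥ p.2.2.1 = 1 ∧ 0 < p.2.2.2 ∧
      p.2.2.2 * p.2.1 = x ∧ p.2.2.2 • (p.1 + p.2.2.1) = A ∧
      p.2.2.2 • (p.1 - p.2.2.1) = b
    Real.sqrt (x ^ 2 + u ⬝ᵥ u) = m ∧ m ≠ 0 ∧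
    P (m⁻¹ • v, x / m, m⁻¹ • u, m) ∧
    ∀ p, P p → p = (m⁻¹ • v, x / m, m⁻¹ • u, m) := by
  intro v u m P
  have hcomm : A ⬝ᵥ b = b ⬝ᵥ A := dotProduct_comm A b
  have hvv : v ⬝ᵥ v = x ^ 2 + u ⬝ᵥ u := by
    show ((1 / 2 : ℝ) • (A + b)) ⬝ᵥ ((1 / 2 : ℝ) • (A + b))
        = x ^ 2 + ((1 / 2 : ℝ) • (A - b)) ⬝ᵥ ((1 / 2 : ℝ) • (A - b))
    simp only [smul_dotProduct, dotProduct_smul,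
      add_dotProduct, dotProduct_add, sub_dotProduct,
      dotProduct_sub, smul_eq_mul]
    linarith [hcomm, hnull]
  have hunn : (0:ℝ) ≤ u ⬝ᵥ u := Finset.sum_nonneg fun i _ => mul_self_nonneg _
  have hx2 : (0:ℝ) ≤ x ^ 2 := sq_nonneg x
  have hvpos : 0 < v ⬝ᵥ v := by
    rcases lt_or_eq_of_le (Finset.sum_nonneg fun i _ => mul_self_nonneg (v i)) with h | h
    · exact h
    · exfalso
      have h0 : v ⬝ᵥ v = 0 := h.symm
      have hx0 : x = 0 := by
        have : x ^ 2 = 0 := by linarith [hvv ▸ h0, hunn, hx2]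
        exact pow_eq_zero_iff (n := 2) (by norm_num) |>.mp this
      have hu0 : u = 0 := dotProduct_self_eq_zero.mp (by linarith [hvv ▸ h0, hx2])
      have hv0 : v = 0 := dotProduct_self_eq_zero.mp h0
      have hA : A = 0 := by
        have := congrArg (fun w => w + w) hv0
        have h1 : A + b = 0 := by
          have : (1 / 2 : ℝ) • (A + b) = 0 := hv0
          have := congrArg (fun w => (2:ℝ) • w) this
          simpa [smul_smul] using this
        have h2 : A - b = 0 := by
          have : (1 / 2 : ℝ) • (A - b) = 0 := hu0
          have := congrArg (fun w => (2:ℝ) • w) this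
          simpa [smul_smul] using this
        funext i
        have e1 := congrFun h1 i
        have e2 := congrFun h2 i
        simp only [Pi.add_apply, Pi.sub_apply, Pi.zero_apply] at e1 e2 ⊢
        linarith
      have hb : b = 0 := by
        have h1 : A + b = 0 := by
          have : (1 / 2 : ℝ) • (A + b) = 0 := hv0
          have := congrArg (fun w => (2:ℝ) • w) this
          simpa [smul_smul] using this
        funext i
        have e1 := congrFun h1 i
        have eA := congrFun hA i
        simp only [Pi.add_apply, Pi.zero_apply] at e1 eA ⊢
        linarith
      exact hne (by simp [hx0, hA, hb, Prod.ext_iff])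
  have hmpos : 0 < m := Real.sqrt_pos.mpr hvpos
  have hm2 : m ^ 2 = v ⬝ᵥ v := Real.sq_sqrt hvpos.le
  have hmne : m ≠ 0 := ne_of_gt hmpos
  have hvA : v + u = A := by
    funext i
    show (1/2 : ℝ) * (A i + b i) + (1/2 : ℝ) * (A i - b i) = A i
    ring
  have hvb : v - u = b := by
    funext i
    show (1/2 : ℝ) * (A i + b i) - (1/2 : ℝ) * (A i - b i) = b i
    ring
  refine ⟨by rw [← hvv], hmne, ⟨?_, ?_, hmpos, ?_, ?_, ?_⟩, ?_⟩
  · show (m⁻¹ • v) ⬝ᵥ (m⁻¹ • v) = 1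
    rw [smul_dotProduct, dotProduct_smul, smul_eq_mul, smul_eq_mul,
      ← hm2]
    field_simp
  · show (x / m) ^ 2 + (m⁻¹ • u) ⬝ᵥ (m⁻¹ • u) = 1
    rw [smul_dotProduct, dotProduct_smul, smul_eq_mul, smul_eq_mul]
    have h : x ^ 2 + u ⬝ᵥ u = m ^ 2 := by rw [hm2, hvv]
    set s := u ⬝ᵥ u with hs
    field_simp
    nlinarith [h, hmpos]
  · show m * (x / m) = x
    field_simp
  · show m • (m⁻¹ • v + m⁻¹ • u) = A
    rw [← smul_add, smul_smul, mul_inv_cancel₀ hmne, one_smul, hvA]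
  · show m • (m⁻¹ • v - m⁻¹ • u) = b
    rw [← smul_sub, smul_smul, mul_inv_cancel₀ hmne, one_smul, hvb]
  · rintro ⟨w, y, z, t⟩ ⟨hw, hyz, ht, hty, hA', hb'⟩
    have htw : t • w = v := by
      funext i
      have e1 := congrFun hA' i
      have e2 := congrFun hb' i
      simp only [Pi.smul_apply, Pi.add_apply, Pi.sub_apply, smul_eq_mul] at e1 e2
      show t * w i = (1/2 : ℝ) * (A i + b i)
      rw [← e1, ← e2]; ring
    have htz : t • z = u := by
      funext i
      have e1 := congrFun hA' i
      have e2 := congrFun hb' i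
      simp only [Pi.smul_apply, Pi.add_apply, Pi.sub_apply, smul_eq_mul] at e1 e2
      show t * z i = (1/2 : ℝ) * (A i - b i)
      rw [← e1, ← e2]; ring
    have ht2 : t ^ 2 = v ⬝ᵥ v := by
      rw [← htw, smul_dotProduct, dotProduct_smul, smul_eq_mul,
        smul_eq_mul, hw]
      ring
    have htm : t = m := by
      have : t ^ 2 = m ^ 2 := by rw [ht2, hm2]
      nlinarith [hmpos, ht]
    have hwv : w = m⁻¹ • v := by
      rw [← htw, htm, smul_smul, inv_mul_cancel₀ hmne, one_smul]
    have hzu : z = m⁻¹ • u := by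
      rw [← htz, htm, smul_smul, inv_mul_cancel₀ hmne, one_smul]
    have hyx : y = x / m := by
      rw [← hty, htm]
      field_simp
    exact Prod.ext hwv (Prod.ext hyx (Prod.ext hzu htm))
end

section
/- Define ρ(T, Q, p) ∈ End(Im(𝕆)) by ρ(T,Q,p)(x, A, b) = (pA + bQ, TA − p×b + 2xQ, Q×A − bT + 2xp), for T ∈ sl₃(ℝ), Q ∈ ℝ³, p ∈ (ℝ³)*. Then the commutator satisfies [ρ(T₁,Q₁,p₁), ρ(T₂,Q₂,p₂)] = ρ(T₃,Q₃,p₃) with T₃ = [T₁,T₂] + 3(Q₁p₂ − Q₂p₁) + (p₁Q₂ − p₂Q₁)I₃, Q₃ = T₁Q₂ − T₂Q₁ − 2p₁×p₂, p₃ = p₁T₂ − p₂T₁ + 2Q₁×Q₂. In particular, the image of ρ is a 14-dimensional Lie subalgebra of End(Im(𝕆)). -/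
open Matrix

/-- The `𝔤₂`-representation map on `Im(𝕆) ≅ ℝ ⊕ ℝ³ ⊕ (ℝ³)*`:
`ρ(T,Q,p)(x, A, b) = (pA + bQ, TA − p×b + 2xQ, Q×A − bT + 2xp)`. -/
def rho (T : Matrix (Fin 3) (Fin 3) ℝ) (Q p : Fin 3 → ℝ) :
    ℝ × (Fin 3 → ℝ) × (Fin 3 → ℝ) → ℝ × (Fin 3 → ℝ) × (Fin 3 → ℝ) :=
  fun ζ =>
    (p ⬝ᵥ ζ.2.1 + ζ.2.2 ⬝ᵥ Q,
     T.mulVec ζ.2.1 - crossProduct p ζ.2.2 + (2 * ζ.1) • Q,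
     crossProduct Q ζ.2.1 - vecMul ζ.2.2 T + (2 * ζ.1) • p)

set_option maxHeartbeats 1000000 in
/-- The commutator identity `[ρ(T₁,Q₁,p₁), ρ(T₂,Q₂,p₂)] = ρ(T₃,Q₃,p₃)` with
`T₃ = [T₁,T₂] + 3(Q₁p₂ − Q₂p₁) + (p₁Q₂ − p₂Q₁)I₃`,
`Q₃ = T₁Q₂ − T₂Q₁ − 2p₁×p₂`, `p₃ = p₁T₂ − p₂T₁ + 2Q₁×Q₂`; in particular the
image of the injective linear map `ρ` is a 14-dimensional Lie subalgebra of
`End(Im 𝕆)`, a model of `𝔤₂`. -/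
theorem rho_commutator (T₁ T₂ : Matrix (Fin 3) (Fin 3) ℝ)
    (hT₁ : T₁.trace = 0) (hT₂ : T₂.trace = 0) (Q₁ Q₂ p₁ p₂ : Fin 3 → ℝ) :
    (∀ ζ : ℝ × (Fin 3 → ℝ) × (Fin 3 → ℝ),
      rho T₁ Q₁ p₁ (rho T₂ Q₂ p₂ ζ) - rho T₂ Q₂ p₂ (rho T₁ Q₁ p₁ ζ) =
        rho (T₁ * T₂ - T₂ * T₁ + 3 • (vecMulVec Q₁ p₂ - vecMulVec Q₂ p₁)
              + (p₁ ⬝ᵥ Q₂ - p₂ ⬝ᵥ Q₁) • (1 : Matrix (Fin 3) (Fin 3) ℝ))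
            (T₁.mulVec Q₂ - T₂.mulVec Q₁ - 2 • crossProduct p₁ p₂)
            (vecMul p₁ T₂ - vecMul p₂ T₁ + 2 • crossProduct Q₁ Q₂) ζ) ∧
    Function.Injective
      (fun d : Matrix (Fin 3) (Fin 3) ℝ × (Fin 3 → ℝ) × (Fin 3 → ℝ) =>
        rho d.1 d.2.1 d.2.2) := by
  constructor
  · rintro ⟨x, A, b⟩
    have h1 : T₁ 2 2 = -(T₁ 0 0 + T₁ 1 1) := by
      simp [Matrix.trace, Fin.sum_univ_three, Matrix.diag] at hT₁; linarith
    have h2 : T₂ 2 2 = -(T₂ 0 0 + T₂ 1 1) := by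
      simp [Matrix.trace, Fin.sum_univ_three, Matrix.diag] at hT₂; linarith
    refine Prod.ext ?_ (Prod.ext ?_ ?_)
    · simp [rho, dotProduct, Fin.sum_univ_three, crossProduct, mulVec, vecMul,
        Matrix.mul_apply, vecMulVec, Matrix.one_apply, Matrix.vecHead, Matrix.vecTail,
        Function.comp, Pi.smul_apply, smul_eq_mul, h1, h2]
      ring
    all_goals
      funext i; fin_cases i <;>
      · simp [rho, dotProduct, Fin.sum_univ_three, crossProduct, mulVec, vecMul,
          Matrix.mul_apply, vecMulVec, Matrix.one_apply, Matrix.vecHead, Matrix.vecTail,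
          Function.comp, Pi.smul_apply, smul_eq_mul, h1, h2]
        ring
  · rintro ⟨T, Q, p⟩ ⟨T', Q', p'⟩ h
    simp only at h
    have e1 := congrFun h (1, 0, 0)
    rw [Prod.ext_iff, Prod.ext_iff] at e1
    obtain ⟨-, eQ, ep⟩ := e1
    have hQ : Q = Q' := by
      funext i
      have := congrFun eQ i
      simp [rho] at this
      linarith
    have hp : p = p' := by
      funext i
      have := congrFun ep i
      simp [rho] at this
      linarith
    have hT : T = T' := by
      ext i j
      have e2 := congrFun h (0, Pi.single j 1, 0)
      rw [Prod.ext_iff, Prod.ext_iff] at e2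
      have := congrFun e2.2.1 i
      simp [rho, Matrix.mulVec_single, hQ] at this
      linarith
    exact Prod.ext hT (Prod.ext hQ hp)
end

section
/- Let X be the endomorphism of Im(𝕆) = ℝ ⊕ ℝ³ ⊕ (ℝ³)* given by X(x, A, b) = (pA + bQ, TA − p×b + 2xQ, Q×A − bT + 2xp), and let τ̃(x,A,b) = (−x, b, A). Then X commutes with τ̃ modulo the Euler field on the null cone (i.e., for every null (x,A,b) with bA = x², X(τ̃ζ) − τ̃(Xζ) is a scalar multiple of τ̃ζ) if and only if T is antisymmetric (Tᵗ = −T) and Q = −p. -/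
open Matrix

/-- The involution `τ̃(x, A, b) = (−x, b, A)`. -/
def tauTilde : ℝ × (Fin 3 → ℝ) × (Fin 3 → ℝ) → ℝ × (Fin 3 → ℝ) × (Fin 3 → ℝ) :=
  fun ζ => (-ζ.1, ζ.2.2, ζ.2.1)

/-- `X = ρ(T,Q,p)` commutes with `τ̃` modulo the Euler field on the null cone
(`X(τ̃ζ) − τ̃(Xζ)` is a multiple of `τ̃ζ` for every null `ζ`) if and only if
`Tᵗ = −T` and `Q = −p`. -/
theorem rho_commutes_with_tau_iff (T : Matrix (Fin 3) (Fin 3) ℝ)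
    (hT : T.trace = 0) (Q p : Fin 3 → ℝ) :
    (∀ (x : ℝ) (A b : Fin 3 → ℝ), b ⬝ᵥ A = x ^ 2 →
      ∃ c : ℝ, rho T Q p (tauTilde (x, A, b)) - tauTilde (rho T Q p (x, A, b))
        = c • tauTilde (x, A, b)) ↔ (Tᵀ = -T ∧ Q = -p) := by
  constructor
  · intro h
    -- key consequence: for every A, (A ᵥ* T) + (T *ᵥ A) is parallel to A
    have key : ∀ A : Fin 3 → ℝ, ∃ c : ℝ, ∀ i : Fin 3,
        (A ᵥ* T) i + (T *ᵥ A) i = c * A i := by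
      intro A
      obtain ⟨c, hc⟩ := h 0 A 0 (by simp)
      refine ⟨-c, fun i => ?_⟩
      have := congrArg (fun z => z.2.2 i) hc
      simp [rho, tauTilde, Prod.smul_def, Pi.smul_apply, smul_eq_mul] at this
      linarith
    have keyQ : ∀ A : Fin 3 → ℝ,
        A 0 * Q 0 + A 1 * Q 1 + A 2 * Q 2 + (p 0 * A 0 + p 1 * A 1 + p 2 * A 2) = 0 := by
      intro A
      obtain ⟨c, hc⟩ := h 0 A 0 (by simp)
      have := congrArg (fun z => z.1) hc
      simp [rho, tauTilde, Prod.smul_def, smul_eq_mul, dotProduct,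
        Fin.sum_univ_three] at this
      linarith
    obtain ⟨c0, h0⟩ := key ![1,0,0]
    obtain ⟨c1, h1⟩ := key ![0,1,0]
    obtain ⟨c2, h2⟩ := key ![0,0,1]
    obtain ⟨c01, h01⟩ := key ![1,1,0]
    obtain ⟨c02, h02⟩ := key ![1,0,1]
    obtain ⟨c12, h12⟩ := key ![0,1,1]
    have htr : T 0 0 + T 1 1 + T 2 2 = 0 := by
      simpa [Matrix.trace, Fin.sum_univ_three, Matrix.diag] using hT
    have simp9 : ∀ (v : Fin 3 → ℝ) (i : Fin 3), (v ᵥ* T) i + (T *ᵥ v) i =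
        (v 0 * T 0 i + v 1 * T 1 i + v 2 * T 2 i) +
        (T i 0 * v 0 + T i 1 * v 1 + T i 2 * v 2) := by
      intro v i
      simp [vecMul, mulVec, dotProduct, Fin.sum_univ_three]
    simp only [simp9] at h0 h1 h2 h01 h02 h12
    constructor
    · have e00 := h0 0; have e10 := h0 1; have e20 := h0 2
      have e01 := h1 0; have e11 := h1 1; have e21 := h1 2
      have e02 := h2 0; have e12' := h2 1; have e22 := h2 2
      have f0 := h01 0; have f1 := h01 1
      have g0 := h02 0; have g2 := h02 2
      have k1 := h12 1; have k2 := h12 2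
      simp [Matrix.cons_val_zero, Matrix.cons_val_one] at e00 e10 e20 e01 e11 e21 e02 e12' e22 f0 f1 g0 g2 k1 k2
      ext i j
      fin_cases i <;> fin_cases j <;>
        simp only [Fin.zero_eta, Fin.mk_one, Fin.reduceFinMk,
          Matrix.transpose_apply, Matrix.neg_apply] <;> linarith
    · have q0 := keyQ ![1,0,0]
      have q1 := keyQ ![0,1,0]
      have q2 := keyQ ![0,0,1]
      simp at q0 q1 q2
      funext i
      fin_cases i <;>
        simp only [Fin.zero_eta, Fin.mk_one, Fin.reduceFinMk, Pi.neg_apply] <;> linarith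
  · rintro ⟨hTa, rfl⟩
    have hvm : ∀ v : Fin 3 → ℝ, v ᵥ* T = -(T *ᵥ v) := by
      intro v
      rw [← mulVec_transpose, hTa, neg_mulVec]
    intro x A b _
    refine ⟨0, ?_⟩
    rw [zero_smul, sub_eq_zero]
    simp only [rho, tauTilde, hvm, Prod.mk.injEq]
    refine ⟨?_, ?_, ?_⟩
    · simp [dotProduct, Fin.sum_univ_three]; ring
    · funext i; fin_cases i <;>
        simp [cross_apply, mulVec, dotProduct, Fin.sum_univ_three] <;> ring
    · funext i; fin_cases i <;>
        simp [cross_apply, mulVec, dotProduct, Fin.sum_univ_three] <;> ring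
end
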